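/- Let $n\ge 1$, $K=\mathbb{C}(z_1,\dots,z_n)$, and $G_a(X)=\prod_{j<a}(1+z_jX)\prod_{j>a}(1-z_jX)$. For $0\le l\le n$, the wedge products $G_{p_1}\wedge\cdots\wedge G_{p_l}$ for $1\le p_1<\cdots<p_l\le n$ form a $K$-basis of $\Lambda^l V$, where $V$ is the $K$-vector space of polynomials in $X$ of degree at most $n-1$. -/

import Mathlib

open Polynomial

open ExteriorAlgebra in
theorem aux_wedge_li {K M : Type*} [Field K] [AddCommGroup M] [Module K M] {n l : ℕ}
    (b : Module.Basis (Fin n) K M) :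
    LinearIndependent K (fun p : {p : Fin l → Fin n // StrictMono p} =>
      ExteriorAlgebra.ιMulti K l (fun i => b (p.1 i))) := by
  classical
  rw [Fintype.linearIndependent_iff]
  intro c hc p
  set A : M [⋀^Fin l]→ₗ[K] K :=
    (Matrix.detRowAlternating (R := K) (n := Fin l)).compLinearMap
      (LinearMap.pi fun j => b.coord (p.1 j)) with hA
  set φ : ExteriorAlgebra K M →ₗ[K] K :=
    ExteriorAlgebra.liftAlternating
      (Function.update (fun i => (0 : M [⋀^Fin i]→ₗ[K] K)) l A) with hφ
  have key : ∀ q : {p : Fin l → Fin n // StrictMono p},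
      φ (ExteriorAlgebra.ιMulti K l (fun i => b (q.1 i))) = if q = p then 1 else 0 := by
    intro q
    have h1 : φ (ExteriorAlgebra.ιMulti K l (fun i => b (q.1 i)))
        = A (fun i => b (q.1 i)) := by
      rw [hφ, ExteriorAlgebra.liftAlternating_apply_ιMulti, Function.update_self]
    rw [h1]
    have h2 : A (fun i => b (q.1 i)) =
        Matrix.det (Matrix.of fun i j => if p.1 j = q.1 i then (1:K) else 0) := by
      rw [hA]
      show Matrix.detRowAlternating _ = _
      congr 1
      ext i j
      simp [LinearMap.pi_apply, Module.Basis.coord_apply, Module.Basis.repr_self, Finsupp.single_apply, eq_comm]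
    rw [h2]
    by_cases hqp : q = p
    · subst hqp
      rw [if_pos rfl]
      have : (Matrix.of fun i j => if q.1 j = q.1 i then (1:K) else 0) = 1 := by
        ext i j
        by_cases h : i = j
        · subst h; simp
        · simp only [Matrix.of_apply, Matrix.one_apply_ne h]
          exact if_neg fun h' => h (q.2.injective h').symm
      rw [this, Matrix.det_one]
    · rw [if_neg hqp]
      have hnot : ∃ j, p.1 j ∉ Set.range q.1 := by
        by_contra hno
        push_neg at hno
        apply hqp
        have hcard : ∀ f : Fin l → Fin n, Function.Injective f →
            (Set.range f).ncard = l := by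
          intro f hf
          rw [← Set.image_univ, Set.ncard_image_of_injective _ hf, Set.ncard_univ,
            Nat.card_eq_fintype_card, Fintype.card_fin]
        have hrange : Set.range q.1 = Set.range p.1 := by
          refine (Set.eq_of_subset_of_ncard_le ?_ ?_ (Set.finite_range _)).symm
          · rintro x ⟨j, rfl⟩
            exact hno j
          · rw [hcard _ q.2.injective, hcard _ p.2.injective]
        have hw : WellFoundedLT (Fin l) := inferInstance
        exact Subtype.ext ((@StrictMono.range_inj (Fin l) (Fin n) _ _ hw _ _ q.2 p.2).mp hrange)
      obtain ⟨j0, hj0⟩ := hnot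
      apply Matrix.det_eq_zero_of_column_eq_zero j0
      intro i
      simp only [Matrix.of_apply]
      rw [if_neg]
      intro h
      exact hj0 ⟨i, h.symm⟩
  have := congrArg φ hc
  rw [map_sum, map_zero] at this
  simp only [map_smul, key, smul_eq_mul, mul_ite, mul_one, mul_zero] at this
  rwa [Finset.sum_ite_eq' Finset.univ p c, if_pos (Finset.mem_univ p)] at this

theorem aux_wedge_span {K M : Type*} [Field K] [AddCommGroup M] [Module K M] {n l : ℕ}
    (b : Module.Basis (Fin n) K M) :
    Submodule.span K (Set.range (fun p : {p : Fin l → Fin n // StrictMono p} =>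
      ExteriorAlgebra.ιMulti K l (fun i => b (p.1 i)))) = ⋀[K]^l M := by
  classical
  apply le_antisymm
  · rw [Submodule.span_le]
    rintro _ ⟨p, rfl⟩
    exact ExteriorAlgebra.ιMulti_range K l ⟨_, rfl⟩
  · rw [← ExteriorAlgebra.ιMulti_span_fixedDegree, Submodule.span_le]
    rintro _ ⟨v, rfl⟩
    have hv : (ExteriorAlgebra.ιMulti K l (M := M)) v =
        (ExteriorAlgebra.ιMulti K l (M := M)) (fun i => ∑ a, b.repr (v i) a • b a) := by
      congr 1
      funext i
      exact (b.sum_repr (v i)).symm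
    rw [hv]
    rw [show ((ExteriorAlgebra.ιMulti K l (M := M)) (fun i => ∑ a, b.repr (v i) a • b a))
        = (ExteriorAlgebra.ιMulti K l (M := M)).toMultilinearMap
          (fun i => ∑ a, b.repr (v i) a • b a) from rfl]
    rw [MultilinearMap.map_sum]
    apply Submodule.sum_mem
    intro r _
    rw [MultilinearMap.map_smul_univ]
    apply Submodule.smul_mem
    by_cases hr : Function.Injective r
    · -- sort r
      set s : Finset (Fin n) := Finset.image r Finset.univ with hs
      have hcard : s.card = l := by
        rw [hs, Finset.card_image_of_injective _ hr, Finset.card_univ, Fintype.card_fin]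
      set p : Fin l → Fin n := fun i => (s.orderIsoOfFin hcard i : Fin n) with hp
      have hpmono : StrictMono p := fun i j hij =>
        (s.orderIsoOfFin hcard).strictMono hij
      have hrange : Set.range r = Set.range p := by
        have h1 : Set.range p = ↑s := by
          rw [hp]
          ext x
          constructor
          · rintro ⟨i, rfl⟩; exact ((s.orderIsoOfFin hcard) i).2
          · intro hx
            exact ⟨(s.orderIsoOfFin hcard).symm ⟨x, hx⟩, by simp⟩
        rw [h1, hs]
        ext x
        simp [Finset.mem_image]
      -- permutation
      have hpinj : Function.Injective p := hpmono.injective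
      set σ : Equiv.Perm (Fin l) :=
        ((Equiv.ofInjective r hr).trans
          ((Equiv.setCongr hrange).trans (Equiv.ofInjective p hpinj).symm)) with hσ
      have hcomp : ∀ i, p (σ i) = r i := by
        intro i
        have : (p (σ i) : Fin n) = ((Equiv.ofInjective p hpinj) (σ i) : Fin n) := rfl
        rw [this, hσ]
        simp
      have : (fun i => b (r i)) = (fun i => b (p i)) ∘ σ := by
        funext i
        simp [Function.comp, hcomp i]
      rw [show ((ExteriorAlgebra.ιMulti K l (M := M)).toMultilinearMap (fun i => b (r i)))
          = (ExteriorAlgebra.ιMulti K l (M := M)) (fun i => b (r i)) from rfl]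
      rw [this]
      rw [AlternatingMap.map_perm (ExteriorAlgebra.ιMulti K l) (fun i => b (p i)) σ]
      rcases Int.units_eq_one_or (Equiv.Perm.sign σ) with h | h
      · rw [h, one_smul]
        exact Submodule.subset_span ⟨⟨p, hpmono⟩, rfl⟩
      · rw [h, Units.smul_def]
        have hmem : (ExteriorAlgebra.ιMulti K l (M := M)) (fun i => b (p i)) ∈
            Submodule.span K (Set.range fun p : {p : Fin l → Fin n // StrictMono p} =>
              ExteriorAlgebra.ιMulti K l (fun i => b (p.1 i))) :=
          Submodule.subset_span ⟨⟨p, hpmono⟩, rfl⟩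
        simpa using Submodule.neg_mem _ hmem
    · have : ¬ Function.Injective (fun i => b (r i)) := by
        intro hinj
        exact hr fun i j hij => hinj (by simp [hij])
      rw [show ((ExteriorAlgebra.ιMulti K l (M := M)).toMultilinearMap (fun i => b (r i)))
          = (ExteriorAlgebra.ιMulti K l (M := M)) (fun i => b (r i)) from rfl]
      rw [AlternatingMap.map_eq_zero_of_not_injective _ _ this]
      exact Submodule.zero_mem _

theorem aux_G_li (n : ℕ)
    (K : Type*) [Field K] [Algebra ℂ K] (z : Fin n → K)
    (hz : AlgebraicIndependent ℂ z)
    (G : Fin n → Polynomial K)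
    (hGdef : ∀ a, G a = (∏ j ∈ Finset.Iio a, (1 + C (z j) * X)) *
      ∏ j ∈ Finset.Ioi a, (1 - C (z j) * X)) :
    LinearIndependent K G := by
  classical
  have hz0 : ∀ a, z a ≠ 0 := by
    intro a ha
    exact hz.transcendental a (ha ▸ isAlgebraic_zero)
  have hdiff : ∀ a j, a ≠ j → z a ≠ z j := fun a j h hj => h (hz.injective.eq_iff.mp hj)
  have hsum : ∀ a j, a ≠ j → z a + z j ≠ 0 := by
    intro a j hne h
    have h0 : (MvPolynomial.X a + MvPolynomial.X j : MvPolynomial (Fin n) ℂ) = 0 := by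
      apply hz
      simp [map_add, h]
    have := congrArg (MvPolynomial.coeff (Finsupp.single a 1)) h0
    simp [MvPolynomial.coeff_X', Finsupp.single_left_inj, Ne.symm hne] at this
  rw [Fintype.linearIndependent_iff]
  intro c hc
  have key : ∀ a : Fin n, (∀ b, a < b → c b = 0) → c a = 0 := by
    intro a ha
    set t : K := (z a)⁻¹ with ht
    have hzero : ∀ b : Fin n, b < a → eval t (G b) = 0 := by
      intro b hba
      rw [hGdef b, eval_mul]
      apply mul_eq_zero_of_right
      rw [eval_prod]
      apply Finset.prod_eq_zero (Finset.mem_Ioi.2 hba)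
      simp [ht, mul_inv_cancel₀ (hz0 a)]
    have hane : eval t (G a) ≠ 0 := by
      rw [hGdef a, eval_mul, eval_prod, eval_prod]
      apply mul_ne_zero <;> rw [Finset.prod_ne_zero_iff] <;> intro j hj h0
      · rw [Finset.mem_Iio] at hj
        simp only [eval_add, eval_one, eval_mul, eval_C, eval_X] at h0
        apply hsum a j (Ne.symm (ne_of_lt hj))
        rw [ht] at h0
        field_simp [hz0 a] at h0
        linear_combination h0
      · rw [Finset.mem_Ioi] at hj
        simp only [eval_sub, eval_one, eval_mul, eval_C, eval_X] at h0
        apply hdiff a j (Ne.symm (ne_of_gt hj))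
        rw [ht] at h0
        field_simp [hz0 a] at h0
        linear_combination h0
    have hev := congrArg (eval t) hc
    rw [eval_finset_sum, eval_zero] at hev
    have hsingle : ∀ b ∈ Finset.univ, b ≠ a → eval t (c b • G b) = 0 := by
      intro b _ hba
      rcases lt_or_gt_of_ne hba with h | h
      · rw [eval_smul, hzero b h, smul_zero]
      · rw [ha b h, zero_smul, eval_zero]
    rw [Finset.sum_eq_single a hsingle (by simp)] at hev
    rw [eval_smul, smul_eq_mul] at hev
    exact (mul_eq_zero.mp hev).resolve_right hane
  have all : ∀ k : ℕ, ∀ a : Fin n, n ≤ a.1 + k → c a = 0 := by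
    intro k
    induction k with
    | zero => intro a h; omega
    | succ k ih =>
      intro a h
      apply key
      intro b hb
      apply ih
      have := hb
      rw [Fin.lt_def] at this
      omega
  intro a
  exact all n a (by omega)

/-- Let `K = ℂ(z₁,…,zₙ)` (formalized as any field extension of `ℂ` in which
`z₁,…,zₙ` are algebraically independent), and
`G_a(X) = ∏_{j<a}(1+z_jX) ∏_{j>a}(1-z_jX)`.  For `0 ≤ l ≤ n`, the wedge products
`G_{p₁} ∧ ⋯ ∧ G_{p_l}` over `1 ≤ p₁ < ⋯ < p_l ≤ n` form a `K`-basis of `Λ^l V`, where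
`V` is the space of polynomials in `X` of degree at most `n-1` over `K`. -/
theorem stmt6 (n : ℕ) (hn : 1 ≤ n) (l : ℕ) (hl : l ≤ n)
    (K : Type*) [Field K] [Algebra ℂ K] (z : Fin n → K)
    (hz : AlgebraicIndependent ℂ z)
    (G : Fin n → Polynomial K)
    (hGdef : ∀ a, G a = (∏ j ∈ Finset.Iio a, (1 + C (z j) * X)) *
      ∏ j ∈ Finset.Ioi a, (1 - C (z j) * X))
    (hG : ∀ a, G a ∈ Polynomial.degreeLT K n) :
    let Gv : Fin n → Polynomial.degreeLT K n := fun a => ⟨G a, hG a⟩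
    let fam : {p : Fin l → Fin n // StrictMono p} →
        ExteriorAlgebra K (Polynomial.degreeLT K n) :=
      fun p => ExteriorAlgebra.ιMulti K l (fun i => Gv (p.1 i))
    LinearIndependent K fam ∧
      Submodule.span K (Set.range fam) = ⋀[K]^l (Polynomial.degreeLT K n) := by
  intro Gv fam
  have hGli : LinearIndependent K G := aux_G_li n K z hz G hGdef
  have hGvli : LinearIndependent K Gv := by
    apply LinearIndependent.of_comp ((Polynomial.degreeLT K n).subtype)
    exact hGli
  haveI : Nonempty (Fin n) := ⟨⟨0, hn⟩⟩
  have hcard : Fintype.card (Fin n) = Module.finrank K (Polynomial.degreeLT K n) := by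
    rw [(Polynomial.degreeLTEquiv K n).finrank_eq, Fintype.card_fin]
    simp [Module.finrank_fin_fun]
  set B := basisOfLinearIndependentOfCardEqFinrank hGvli hcard with hBdef
  have hB : ⇑B = Gv := coe_basisOfLinearIndependentOfCardEqFinrank _ _
  constructor
  · have h := aux_wedge_li (l := l) B
    simp only [hB] at h
    exact h
  · have h := aux_wedge_span (l := l) B
    simp only [hB] at h
    exact h
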